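/- Let Δ̃ and Δ be symmetric positive semidefinite d×d matrices with ‖Δ̃ - Δ‖ ≤ δ‖Δ‖ for some δ ∈ (0,1), and let I_{p,q} = diag(1,...,1,-1,...,-1). Then ‖Δ̃^{1/2} I_{p,q} Δ̃^{1/2} - Δ^{1/2} I_{p,q} Δ^{1/2}‖ ≤ 3√δ ‖Δ‖. -/

import Mathlib

open Matrix
open scoped Matrix.Norms.L2Operator

/-- The square root of a positive semidefinite matrix, as defined in Mathlib of December 2024
(removed from Mathlib since). -/
noncomputable def Matrix.PosSemidef.sqrt {n : Type*} [Fintype n] [DecidableEq n]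
    {A : Matrix n n ℝ} (hA : A.PosSemidef) : Matrix n n ℝ :=
  hA.1.eigenvectorUnitary.1 * diagonal ((↑) ∘ (√·) ∘ hA.1.eigenvalues) *
  (star hA.1.eigenvectorUnitary : Matrix n n ℝ)

/-- The signature matrix `I_{p,q} = diag(1,…,1,-1,…,-1)` with `p` ones and `q` minus ones. -/
noncomputable def Ipq (p q : ℕ) : Matrix (Fin (p + q)) (Fin (p + q)) ℝ :=
  Matrix.diagonal (fun i => if (i : ℕ) < p then (1 : ℝ) else -1)

lemma Matrix.PosSemidef.posSemidef_sqrt {n : Type*} [Fintype n] [DecidableEq n]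
    {A : Matrix n n ℝ} (hA : A.PosSemidef) : hA.sqrt.PosSemidef := by
  unfold Matrix.PosSemidef.sqrt
  rw [Matrix.star_eq_conjTranspose]
  refine Matrix.PosSemidef.mul_mul_conjTranspose_same ?_ _
  rw [Matrix.posSemidef_diagonal_iff]
  intro i
  simp [Real.sqrt_nonneg]

lemma Matrix.PosSemidef.sqrt_mul_self {n : Type*} [Fintype n] [DecidableEq n]
    {A : Matrix n n ℝ} (hA : A.PosSemidef) : hA.sqrt * hA.sqrt = A := by
  have hs := hA.1.spectral_theorem
  rw [Unitary.conjStarAlgAut_apply] at hs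
  unfold Matrix.PosSemidef.sqrt
  calc _ = (hA.1.eigenvectorUnitary : Matrix n n ℝ) *
        (diagonal ((↑) ∘ (√·) ∘ hA.1.eigenvalues) *
          ((star hA.1.eigenvectorUnitary : Matrix n n ℝ) * (hA.1.eigenvectorUnitary : Matrix n n ℝ)) *
          diagonal ((↑) ∘ (√·) ∘ hA.1.eigenvalues)) *
        (star hA.1.eigenvectorUnitary : Matrix n n ℝ) := by simp only [mul_assoc]
    _ = A := by
      rw [Unitary.coe_star_mul_self, mul_one, diagonal_mul_diagonal]
      refine Eq.trans ?_ hs.symm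
      congr 3
      ext i
      simp [Real.mul_self_sqrt (hA.eigenvalues_nonneg i)]

section Aux

variable {n : Type*} [Fintype n] [DecidableEq n]

lemma aux_l2_opNorm_one_le : ‖(1 : Matrix n n ℝ)‖ ≤ 1 := by
  rw [Matrix.cstar_norm_def, _root_.map_one, ContinuousLinearMap.one_def]
  exact ContinuousLinearMap.norm_id_le

lemma aux_l2_opNorm_diagonal_le (f : n → ℝ) (t : ℝ) (ht : 0 ≤ t) (hf : ∀ i, |f i| ≤ t) :
    ‖Matrix.diagonal f‖ ≤ t := by
  rw [Matrix.l2_opNorm_def]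
  refine ContinuousLinearMap.opNorm_le_bound _ ht fun x => ?_
  have hx : (Matrix.toEuclideanLin.trans LinearMap.toContinuousLinearMap
      (Matrix.diagonal f)) x
      = (WithLp.equiv 2 (n → ℝ)).symm (Matrix.diagonal f *ᵥ (WithLp.equiv 2 (n → ℝ)) x) := rfl
  rw [hx]
  rw [EuclideanSpace.norm_eq, EuclideanSpace.norm_eq]
  have h1 : ∀ i, ‖(WithLp.equiv 2 (n → ℝ)).symm (Matrix.diagonal f *ᵥ (WithLp.equiv 2 (n → ℝ)) x) i‖ ^ 2
      ≤ t ^ 2 * ‖x i‖ ^ 2 := by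
    intro i
    have : (WithLp.equiv 2 (n → ℝ)).symm (Matrix.diagonal f *ᵥ (WithLp.equiv 2 (n → ℝ)) x) i
        = f i * x i := by
      simp [Matrix.mulVec_diagonal]
    rw [this]
    simp only [Real.norm_eq_abs]
    rw [abs_mul, mul_pow]
    exact mul_le_mul_of_nonneg_right (pow_le_pow_left₀ (abs_nonneg _) (hf i) 2) (sq_nonneg _)
  calc Real.sqrt (∑ i, ‖(WithLp.equiv 2 (n → ℝ)).symm (Matrix.diagonal f *ᵥ (WithLp.equiv 2 (n → ℝ)) x) i‖ ^ 2)
      ≤ Real.sqrt (∑ i, t ^ 2 * ‖x i‖ ^ 2) := by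
        exact Real.sqrt_le_sqrt (Finset.sum_le_sum fun i _ => h1 i)
    _ = t * Real.sqrt (∑ i, ‖x i‖ ^ 2) := by
        rw [← Finset.mul_sum, Real.sqrt_mul (sq_nonneg t), Real.sqrt_sq ht]

lemma aux_quad_le_norm (M : Matrix n n ℝ) (v : EuclideanSpace ℝ n) (hv : ‖v‖ = 1) :
    |⇑v ⬝ᵥ (M *ᵥ ⇑v)| ≤ ‖M‖ := by
  have h1 : ⇑v ⬝ᵥ (M *ᵥ ⇑v)
      = inner ℝ v ((EuclideanSpace.equiv n ℝ).symm (M *ᵥ ⇑v)) := by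
    rw [EuclideanSpace.inner_eq_star_dotProduct]
    simp [dotProduct, mul_comm]
  rw [h1]
  calc |inner ℝ v ((EuclideanSpace.equiv n ℝ).symm (M *ᵥ ⇑v))|
      ≤ ‖v‖ * ‖(EuclideanSpace.equiv n ℝ).symm (M *ᵥ ⇑v)‖ := abs_real_inner_le_norm _ _
    _ ≤ ‖v‖ * (‖M‖ * ‖v‖) := by
        have := Matrix.l2_opNorm_mulVec M v
        exact mul_le_mul_of_nonneg_left this (norm_nonneg v)
    _ = ‖M‖ := by rw [hv]; ring

lemma aux_psd_quad_nonneg {M : Matrix n n ℝ} (hM : M.PosSemidef) (v : n → ℝ) :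
    0 ≤ v ⬝ᵥ (M *ᵥ v) := by
  have := hM.dotProduct_mulVec_nonneg v
  simpa using this

/-- Key perturbation bound for matrix square roots. -/
lemma aux_sqrt_perturb {A B : Matrix n n ℝ} (hA : A.PosSemidef) (hB : B.PosSemidef) :
    ‖hA.sqrt - hB.sqrt‖ ≤ Real.sqrt ‖A - B‖ := by
  set C := hA.sqrt - hB.sqrt with hCdef
  have hC : C.IsHermitian := hA.posSemidef_sqrt.1.sub hB.posSemidef_sqrt.1
  set s := ‖A - B‖ with hsdef
  have hs : 0 ≤ s := norm_nonneg _
  -- eigenvalue bound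
  have key : ∀ i, (hC.eigenvalues i) ^ 2 ≤ s := by
    intro i
    set v : EuclideanSpace ℝ n := hC.eigenvectorBasis i with hvdef
    have hv : ‖v‖ = 1 := hC.eigenvectorBasis.orthonormal.1 i
    set lam := hC.eigenvalues i with hlamdef
    have heig : C *ᵥ ⇑v = lam • ⇑v := hC.mulVec_eigenvectorBasis i
    set α := ⇑v ⬝ᵥ (hA.sqrt *ᵥ ⇑v) with hαdef
    set β := ⇑v ⬝ᵥ (hB.sqrt *ᵥ ⇑v) with hβdef
    have hα : 0 ≤ α := aux_psd_quad_nonneg hA.posSemidef_sqrt _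
    have hβ : 0 ≤ β := aux_psd_quad_nonneg hB.posSemidef_sqrt _
    have hαβ : α - β = lam := by
      have : ⇑v ⬝ᵥ (C *ᵥ ⇑v) = α - β := by
        rw [hCdef, Matrix.sub_mulVec, dotProduct_sub]
      have hvv : ⇑v ⬝ᵥ ⇑v = 1 := by
        have h2 := real_inner_self_eq_norm_sq v
        rw [EuclideanSpace.inner_eq_star_dotProduct, hv] at h2
        simpa using h2
      rw [← this, heig, dotProduct_smul, hvv, smul_eq_mul, mul_one]
    -- A - B = sqrtA * C + C * sqrtB
    have hdecomp : A - B = hA.sqrt * C + C * hB.sqrt := by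
      rw [hCdef]
      simp only [mul_sub, sub_mul]
      rw [hA.sqrt_mul_self, hB.sqrt_mul_self]
      abel
    have hCT : Cᵀ = C := by
      have := hC
      rw [Matrix.IsHermitian] at this
      simpa [Matrix.conjTranspose_eq_transpose_of_trivial] using this
    have key2 : ⇑v ⬝ᵥ ((A - B) *ᵥ ⇑v) = lam * (α + β) := by
      rw [hdecomp, Matrix.add_mulVec, dotProduct_add]
      have e1 : ⇑v ⬝ᵥ ((hA.sqrt * C) *ᵥ ⇑v) = lam * α := by
        rw [← Matrix.mulVec_mulVec, heig, Matrix.mulVec_smul, dotProduct_smul]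
        rfl
      have e2 : ⇑v ⬝ᵥ ((C * hB.sqrt) *ᵥ ⇑v) = lam * β := by
        rw [← Matrix.mulVec_mulVec, Matrix.dotProduct_mulVec, ← Matrix.mulVec_transpose, hCT,
          heig]
        rw [smul_dotProduct]
        rfl
      rw [e1, e2]
      ring
    have habs : |lam * (α + β)| ≤ s := by
      rw [← key2]
      exact aux_quad_le_norm _ _ hv
    rcases abs_le.mp habs with ⟨h1, h2⟩
    rcases le_or_gt 0 lam with hl | hl
    · nlinarith
    · nlinarith
  have keyabs : ∀ i, |hC.eigenvalues i| ≤ Real.sqrt s := by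
    intro i
    rw [← Real.sqrt_sq_eq_abs]
    exact Real.sqrt_le_sqrt (key i)
  -- spectral theorem
  have hspec := hC.spectral_theorem
  rw [Unitary.conjStarAlgAut_apply] at hspec
  set U : Matrix n n ℝ := (hC.eigenvectorUnitary : Matrix n n ℝ) with hUdef
  have hU1 : ‖U‖ ≤ 1 := by
    have h2 : ‖Uᴴ * U‖ = ‖U‖ * ‖U‖ := Matrix.l2_opNorm_conjTranspose_mul_self U
    have h3 : Uᴴ * U = 1 := by
      rw [← Matrix.star_eq_conjTranspose]
      exact Unitary.coe_star_mul_self hC.eigenvectorUnitary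
    rw [h3] at h2
    have h4 : ‖U‖ * ‖U‖ ≤ 1 := h2 ▸ aux_l2_opNorm_one_le
    nlinarith [norm_nonneg U]
  have hUstar : ‖star U‖ ≤ 1 := by
    rw [Matrix.star_eq_conjTranspose, Matrix.l2_opNorm_conjTranspose]
    exact hU1
  have hD : ‖Matrix.diagonal (RCLike.ofReal ∘ hC.eigenvalues : n → ℝ)‖ ≤ Real.sqrt s := by
    apply aux_l2_opNorm_diagonal_le _ _ (Real.sqrt_nonneg s)
    intro i
    simpa using keyabs i
  calc ‖C‖ = ‖U * Matrix.diagonal (RCLike.ofReal ∘ hC.eigenvalues) * star U‖ := by rw [← hspec]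
    _ ≤ ‖U * Matrix.diagonal (RCLike.ofReal ∘ hC.eigenvalues)‖ * ‖star U‖ :=
        Matrix.l2_opNorm_mul _ _
    _ ≤ (‖U‖ * ‖Matrix.diagonal (RCLike.ofReal ∘ hC.eigenvalues)‖) * ‖star U‖ := by
        apply mul_le_mul_of_nonneg_right (Matrix.l2_opNorm_mul _ _) (norm_nonneg _)
    _ ≤ (1 * Real.sqrt s) * 1 := by
        apply mul_le_mul _ hUstar (norm_nonneg _) (by positivity)
        exact mul_le_mul hU1 hD (norm_nonneg _) zero_le_one
    _ = Real.sqrt s := by ring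

lemma aux_sqrt_norm {A : Matrix n n ℝ} (hA : A.PosSemidef) :
    ‖hA.sqrt‖ = Real.sqrt ‖A‖ := by
  have h1 : ‖hA.sqrt‖ * ‖hA.sqrt‖ = ‖A‖ := by
    rw [← Matrix.l2_opNorm_conjTranspose_mul_self hA.sqrt, hA.posSemidef_sqrt.1,
      hA.sqrt_mul_self]
  rw [← h1, Real.sqrt_mul_self (norm_nonneg _)]

end Aux

/-- If `Δ̃, Δ` are positive semidefinite with `‖Δ̃ - Δ‖ ≤ δ ‖Δ‖`, `δ ∈ (0,1)`, then
`‖Δ̃^{1/2} I_{p,q} Δ̃^{1/2} - Δ^{1/2} I_{p,q} Δ^{1/2}‖ ≤ 3 √δ ‖Δ‖`. -/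
theorem sqrt_indefinite_perturbation {p q : ℕ}
    (Δt Δ : Matrix (Fin (p + q)) (Fin (p + q)) ℝ)
    (hΔt : Δt.PosSemidef) (hΔ : Δ.PosSemidef)
    (δ : ℝ) (hδ0 : 0 < δ) (hδ1 : δ < 1)
    (h : ‖Δt - Δ‖ ≤ δ * ‖Δ‖) :
    ‖hΔt.sqrt * Ipq p q * hΔt.sqrt - hΔ.sqrt * Ipq p q * hΔ.sqrt‖ ≤
      3 * Real.sqrt δ * ‖Δ‖ := by
  set SA := hΔt.sqrt with hSA
  set SB := hΔ.sqrt with hSB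
  set J := Ipq p q with hJ
  set E := SA - SB with hE
  have hNd : (0:ℝ) ≤ ‖Δ‖ := norm_nonneg _
  have hJ1 : ‖J‖ ≤ 1 := by
    rw [hJ, Ipq]
    apply aux_l2_opNorm_diagonal_le _ _ zero_le_one
    intro i
    split <;> simp
  have hEnorm : ‖E‖ ≤ Real.sqrt δ * Real.sqrt ‖Δ‖ := by
    calc ‖E‖ ≤ Real.sqrt ‖Δt - Δ‖ := aux_sqrt_perturb hΔt hΔ
      _ ≤ Real.sqrt (δ * ‖Δ‖) := Real.sqrt_le_sqrt h
      _ = Real.sqrt δ * Real.sqrt ‖Δ‖ := Real.sqrt_mul hδ0.le _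
  have hSAnorm : ‖SA‖ ≤ Real.sqrt 2 * Real.sqrt ‖Δ‖ := by
    rw [hSA, aux_sqrt_norm hΔt]
    calc Real.sqrt ‖Δt‖ ≤ Real.sqrt (2 * ‖Δ‖) := by
          apply Real.sqrt_le_sqrt
          calc ‖Δt‖ = ‖(Δt - Δ) + Δ‖ := by rw [sub_add_cancel]
            _ ≤ ‖Δt - Δ‖ + ‖Δ‖ := norm_add_le _ _
            _ ≤ δ * ‖Δ‖ + ‖Δ‖ := by linarith
            _ ≤ 2 * ‖Δ‖ := by nlinarith
      _ = Real.sqrt 2 * Real.sqrt ‖Δ‖ := Real.sqrt_mul (by norm_num) _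
  have hSBnorm : ‖SB‖ = Real.sqrt ‖Δ‖ := aux_sqrt_norm hΔ
  have hid : SA * J * SA - SB * J * SB = E * J * SA + SB * J * E := by
    rw [hE]
    noncomm_ring
  rw [hid]
  have b1 : ‖E * J * SA‖ ≤ ‖E‖ * ‖J‖ * ‖SA‖ := by
    calc ‖E * J * SA‖ ≤ ‖E * J‖ * ‖SA‖ := Matrix.l2_opNorm_mul _ _
      _ ≤ ‖E‖ * ‖J‖ * ‖SA‖ :=
          mul_le_mul_of_nonneg_right (Matrix.l2_opNorm_mul _ _) (norm_nonneg _)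
  have b2 : ‖SB * J * E‖ ≤ ‖SB‖ * ‖J‖ * ‖E‖ := by
    calc ‖SB * J * E‖ ≤ ‖SB * J‖ * ‖E‖ := Matrix.l2_opNorm_mul _ _
      _ ≤ ‖SB‖ * ‖J‖ * ‖E‖ :=
          mul_le_mul_of_nonneg_right (Matrix.l2_opNorm_mul _ _) (norm_nonneg _)
  have hEn : (0:ℝ) ≤ ‖E‖ := norm_nonneg _
  have hSAn : (0:ℝ) ≤ ‖SA‖ := norm_nonneg _
  have hsd : (0:ℝ) ≤ Real.sqrt δ := Real.sqrt_nonneg _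
  have hsN : (0:ℝ) ≤ Real.sqrt ‖Δ‖ := Real.sqrt_nonneg _
  have hs2 : Real.sqrt 2 ≤ 2 := by
    nlinarith [Real.sq_sqrt (by norm_num : (0:ℝ) ≤ 2), Real.sqrt_nonneg 2]
  have hNN : Real.sqrt ‖Δ‖ * Real.sqrt ‖Δ‖ = ‖Δ‖ := Real.mul_self_sqrt hNd
  calc ‖E * J * SA + SB * J * E‖ ≤ ‖E * J * SA‖ + ‖SB * J * E‖ := norm_add_le _ _
    _ ≤ ‖E‖ * ‖J‖ * ‖SA‖ + ‖SB‖ * ‖J‖ * ‖E‖ := by linarith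
    _ ≤ ‖E‖ * 1 * ‖SA‖ + ‖SB‖ * 1 * ‖E‖ := by
        have := mul_le_mul_of_nonneg_right (mul_le_mul_of_nonneg_left hJ1 hEn) hSAn
        have := mul_le_mul_of_nonneg_right (mul_le_mul_of_nonneg_left hJ1 (norm_nonneg SB)) hEn
        nlinarith [norm_nonneg SB]
    _ = ‖E‖ * ‖SA‖ + ‖SB‖ * ‖E‖ := by ring
    _ ≤ (Real.sqrt δ * Real.sqrt ‖Δ‖) * (Real.sqrt 2 * Real.sqrt ‖Δ‖)
        + Real.sqrt ‖Δ‖ * (Real.sqrt δ * Real.sqrt ‖Δ‖) := by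
        have t1 : ‖E‖ * ‖SA‖ ≤ (Real.sqrt δ * Real.sqrt ‖Δ‖) * (Real.sqrt 2 * Real.sqrt ‖Δ‖) :=
          mul_le_mul hEnorm hSAnorm hSAn (by positivity)
        have t2 : ‖SB‖ * ‖E‖ ≤ Real.sqrt ‖Δ‖ * (Real.sqrt δ * Real.sqrt ‖Δ‖) := by
          rw [hSBnorm]
          exact mul_le_mul_of_nonneg_left hEnorm hsN
        linarith
    _ = (Real.sqrt 2 + 1) * Real.sqrt δ * ‖Δ‖ := by
        linear_combination (Real.sqrt 2 + 1) * Real.sqrt δ * hNN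
    _ ≤ 3 * Real.sqrt δ * ‖Δ‖ := by nlinarith [mul_nonneg hsd hNd, hs2]
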